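/- Let G be a unicyclic graph whose unique cycle C* has vertex set containing the set V⁺ of vertices of degree at least 3 on C*, and let l be the number of leaves of G. Let e = uv be an edge of C* and G' = G \ {e}. Then meg(G') = l if u, v ∈ V⁺; meg(G') = l + 1 if exactly one of u, v lies in V⁺; and meg(G') = l + 2 if neither u nor v lies in V⁺. -/

import Mathlib

open SimpleGraph

variable {V : Type*}

/-- A pair of vertices `u, v` monitors edge `e` in `G` if `u` and `v` are connected
and `e` lies on every shortest path (walk of length `G.dist u v`) between them. -/
def monitors (G : SimpleGraph V) (u v : V) (e : Sym2 V) : Prop :=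
  G.Reachable u v ∧ ∀ p : G.Walk u v, p.length = G.dist u v → e ∈ p.edges

/-- `M` is a monitoring edge-geodetic set of `G`. -/
def IsMEGSet (G : SimpleGraph V) (M : Set V) : Prop :=
  ∀ e ∈ G.edgeSet, ∃ u ∈ M, ∃ v ∈ M, monitors G u v e

/-- The monitoring edge-geodetic number: minimum size of an MEG-set. -/
noncomputable def meg (G : SimpleGraph V) : ℕ :=
  sInf {n | ∃ M : Finset V, IsMEGSet G ↑M ∧ M.card = n}

/- ### Auxiliary lemmas -/

private lemma walk_cons_of_ne {G : SimpleGraph V} {s t : V} (w : G.Walk s t) (hst : s ≠ t) :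
    ∃ (y : V) (h : G.Adj s y) (q : G.Walk y t), w = Walk.cons h q := by
  cases w with
  | nil => exact absurd rfl hst
  | cons h q => exact ⟨_, h, q, rfl⟩

private lemma reach_del {G : SimpleGraph V} {u v : V}
    (hruv : (G.deleteEdges {s(u, v)}).Reachable u v) :
    ∀ {a b : V}, G.Walk a b → (G.deleteEdges {s(u, v)}).Reachable a b := by
  intro a b w
  induction w with
  | nil => exact Reachable.refl _
  | @cons a' c' b' h p ih =>
    refine Reachable.trans ?_ ih
    by_cases hec : s(a', c') = s(u, v)
    · rw [Sym2.eq_iff] at hec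
      rcases hec with ⟨rfl, rfl⟩ | ⟨rfl, rfl⟩
      · exact hruv
      · exact hruv.symm
    · exact SimpleGraph.Adj.reachable (by rw [deleteEdges_adj]; exact ⟨h, by simpa using hec⟩)

private lemma connected_del_cycle_edge {G : SimpleGraph V} (hconn : G.Connected)
    {x u v : V} {c : G.Walk x x} (hc : c.IsCycle) (he : s(u, v) ∈ c.edges) :
    (G.deleteEdges {s(u, v)}).Connected := by
  have hreach : (G \ fromEdgeSet {s(u, v)}).Reachable u v :=
    (adj_and_reachable_delete_edges_iff_exists_cycle.mpr ⟨x, c, hc, he⟩).2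
  have hruv : (G.deleteEdges {s(u, v)}).Reachable u v := hreach
  haveI := hconn.nonempty
  exact Connected.mk fun a b => (hconn.preconnected a b).elim fun w => reach_del hruv w

private lemma card_le_edges_succ [Fintype V] [DecidableEq V] :
    ∀ (n : ℕ) (G : SimpleGraph V) [DecidableRel G.Adj],
      G.Connected → G.edgeFinset.card = n → Fintype.card V ≤ n + 1 := by
  intro n
  induction n using Nat.strong_induction_on with
  | _ n ih =>
    intro G _ hconn hcard
    classical
    by_cases hac : G.IsAcyclic
    · have := SimpleGraph.IsTree.card_edgeFinset (⟨hconn, hac⟩ : G.IsTree)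
      omega
    · simp only [SimpleGraph.IsAcyclic] at hac
      push_neg at hac
      obtain ⟨x₀, c₀, hc₀⟩ := hac
      have hlen := hc₀.three_le_length
      have hne : c₀.edges ≠ [] := by
        intro h
        have := c₀.length_edges
        rw [h] at this
        simp at this
        omega
      obtain ⟨e₀, he₀⟩ := List.exists_mem_of_ne_nil _ hne
      revert he₀
      induction e₀ using Sym2.ind with
      | _ p₀ q₀ =>
        intro he₀
        haveI : DecidableRel (G.deleteEdges {s(p₀, q₀)}).Adj := fun a b =>
          decidable_of_iff (G.Adj a b ∧ s(a, b) ∉ ({s(p₀, q₀)} : Set (Sym2 V)))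
            deleteEdges_adj.symm
        have hmem : s(p₀, q₀) ∈ G.edgeFinset :=
          mem_edgeFinset.mpr (c₀.edges_subset_edgeSet he₀)
        have hc2 : (G.deleteEdges {s(p₀, q₀)}).edgeFinset = G.edgeFinset.erase s(p₀, q₀) := by
          ext e'
          simp only [mem_edgeFinset, edgeSet_deleteEdges, Set.mem_diff,
            Set.mem_singleton_iff, Finset.mem_erase]
          tauto
        have h1 : 1 ≤ n := by
          rw [← hcard]
          exact Finset.card_pos.mpr ⟨_, hmem⟩
        have := ih (n - 1) (by omega) (G.deleteEdges {s(p₀, q₀)})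
          (connected_del_cycle_edge hconn hc₀ he₀)
          (by rw [hc2, Finset.card_erase_of_mem hmem, hcard])
        omega

/-- In a tree, for each oriented edge `a—b`, there is a leaf `x` and a path from `x` to `a`
avoiding `b`. -/
private lemma tree_leaf_path [Fintype V] [DecidableEq V] {G : SimpleGraph V} (hT : G.IsTree)
    {a b : V} (hab : G.Adj a b) :
    ∃ (x : V) (p : G.Walk x a), (∃ y, G.neighborSet x = {y}) ∧ p.IsPath ∧ b ∉ p.support := by
  classical
  have hpu : ∀ ⦃s t : V⦄ (p q : G.Walk s t), p.IsPath → q.IsPath → p = q := by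
    intro s t p q hp hq
    exact congrArg Subtype.val (hT.IsAcyclic.path_unique ⟨p, hp⟩ ⟨q, hq⟩)
  choose P hP hPuniq using fun z => hT.existsUnique_path b z
  have hTa : a ∈ Finset.univ.filter (fun z => a ∈ (P z).support) := by
    simp [Walk.end_mem_support]
  obtain ⟨x, hxT, hmax⟩ := Finset.exists_max_image _ (fun z => (P z).length) ⟨a, hTa⟩
  simp only [Finset.mem_filter] at hxT
  have haX : a ∈ (P x).support := hxT.2
  have hPx : (P x).IsPath := hP x
  have hxb : x ≠ b := by
    rintro rfl
    have : (P x) = Walk.nil := Walk.isPath_iff_eq_nil.mp hPx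
    rw [this] at haX
    simp at haX
    exact hab.ne haX
  obtain ⟨y, hxy, q, hRq⟩ := walk_cons_of_ne (P x).reverse hxb
  have hRpath : (P x).reverse.IsPath := hPx.reverse
  -- x is a leaf with unique neighbor y
  have hleaf : G.neighborSet x = {y} := by
    ext w
    simp only [mem_neighborSet, Set.mem_singleton_iff]
    constructor
    · intro hw
      by_contra hwy
      -- step 1 : w ∉ (P x).support
      have hwP : w ∉ (P x).support := by
        intro hwP
        have hwR : w ∈ (P x).reverse.support := by
          rw [Walk.support_reverse]; exact List.mem_reverse.mpr hwP
        have ht1 : ((P x).reverse.takeUntil w hwR).IsPath := hRpath.takeUntil hwR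
        have heq := hpu _ _ ht1 (Path.singleton hw).2
        have hedge : s(x, w) ∈ (P x).reverse.edges := by
          have : s(x, w) ∈ ((P x).reverse.takeUntil w hwR).edges := by
            rw [heq]
            simp [Path.singleton]
          exact Walk.edges_takeUntil_subset _ _ this
        rw [hRq, Walk.edges_cons] at hedge
        rcases List.mem_cons.mp hedge with h' | h'
        · exact hwy (Sym2.congr_right.mp h'.symm).symm
        · have hxq : x ∈ q.support := Walk.fst_mem_support_of_mem_edges q h'
          have : ¬ (Walk.cons hxy q).support.Nodup := by
            rw [Walk.support_cons]
            simp [hxq]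
          rw [← hRq] at this
          exact this hRpath.support_nodup
      -- step 2 : extend P x to w
      have hP' : ((P x).concat hw).IsPath := by
        have : ((P x).concat hw).reverse.IsPath := by
          rw [Walk.reverse_concat]
          refine Walk.IsPath.cons hRpath ?_
          rw [Walk.support_reverse]
          exact fun h => hwP (List.mem_reverse.mp h)
        have := this.reverse
        rwa [Walk.reverse_reverse] at this
      have hPw : P w = (P x).concat hw := (hPuniq w _ hP').symm
      have hwT : w ∈ Finset.univ.filter (fun z => a ∈ (P z).support) := by
        simp only [Finset.mem_filter, Finset.mem_univ, true_and]
        rw [hPw, Walk.support_concat]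
        exact List.mem_append.mpr (Or.inl haX)
      have := hmax w hwT
      rw [hPw, Walk.length_concat] at this
      omega
    · rintro rfl
      exact ((P x).reverse.adj_of_mem_edges (by rw [hRq, Walk.edges_cons]; simp))
  -- the path from x to a
  have hbtake : b ∈ ((P x).takeUntil a haX).support := Walk.start_mem_support _
  have hnodup := hPx.support_nodup
  have hsplit := (P x).take_spec haX
  have hbD : b ∉ ((P x).dropUntil a haX).support := by
    rw [← hsplit, Walk.support_append] at hnodup
    have hdisj := List.disjoint_of_nodup_append hnodup
    intro hbD
    rw [Walk.support_eq_cons ((P x).dropUntil a haX)] at hbD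
    rcases List.mem_cons.mp hbD with h' | h'
    · exact hab.ne' h'
    · exact hdisj hbtake h'
  refine ⟨x, ((P x).dropUntil a haX).reverse, ⟨y, hleaf⟩, (hPx.dropUntil haX).reverse, ?_⟩
  rw [Walk.support_reverse]
  exact fun h => hbD (List.mem_reverse.mp h)

private lemma tree_megset [Fintype V] [DecidableEq V] {G : SimpleGraph V} [DecidableRel G.Adj]
    (hT : G.IsTree) :
    IsMEGSet G ↑(Finset.univ.filter fun w => G.degree w = 1) := by
  classical
  have hpu : ∀ ⦃s t : V⦄ (p q : G.Walk s t), p.IsPath → q.IsPath → p = q := by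
    intro s t p q hp hq
    exact congrArg Subtype.val (hT.IsAcyclic.path_unique ⟨p, hp⟩ ⟨q, hq⟩)
  have hdeg1 : ∀ (z y : V), G.neighborSet z = {y} → G.degree z = 1 := by
    intro z y h
    have : G.neighborFinset z = {y} := by
      ext w
      simp only [mem_neighborFinset, Finset.mem_singleton, ← mem_neighborSet, h,
        Set.mem_singleton_iff]
    unfold SimpleGraph.degree
    rw [this, Finset.card_singleton]
  intro e he
  induction e using Sym2.ind with
  | _ a b =>
    have hab : G.Adj a b := he
    obtain ⟨xx, p, hxleaf, hp, hbp⟩ := tree_leaf_path hT hab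
    obtain ⟨yy, q, hyleaf, hq, haq⟩ := tree_leaf_path hT hab.symm
    -- supports of p and q are disjoint
    have hdisj : ∀ z, z ∈ p.support → z ∈ q.support → False := by
      intro z hzp hzq
      have hW0 : ∀ e' ∈ ((p.dropUntil z hzp).reverse.append (q.dropUntil z hzq)).edges,
          e' ∉ ({s(a, b)} : Set (Sym2 V)) := by
        intro e' he'
        simp only [Set.mem_singleton_iff]
        rw [Walk.edges_append, Walk.edges_reverse] at he'
        rintro rfl
        rcases List.mem_append.mp he' with h' | h'
        · exact hbp (Walk.snd_mem_support_of_mem_edges p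
            (Walk.edges_dropUntil_subset p hzp (List.mem_reverse.mp h')))
        · exact haq (Walk.fst_mem_support_of_mem_edges q
            (Walk.edges_dropUntil_subset q hzq h'))
      have hreach : (G \ fromEdgeSet {s(a, b)}).Reachable a b :=
        ⟨((p.dropUntil z hzp).reverse.append (q.dropUntil z hzq)).toDeleteEdges _ hW0⟩
      obtain ⟨u', cyc, hcyc, -⟩ :=
        adj_and_reachable_delete_edges_iff_exists_cycle.mp ⟨hab, hreach⟩
      exact hT.IsAcyclic cyc hcyc
    -- the big path
    set W : G.Walk xx yy := p.append (Walk.cons hab q.reverse) with hWdef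
    have hWpath : W.IsPath := by
      rw [Walk.isPath_def, hWdef, Walk.support_append, Walk.support_cons]
      simp only [List.tail_cons]
      refine List.Nodup.append hp.support_nodup ?_ ?_
      · rw [Walk.support_reverse]
        exact List.nodup_reverse.mpr hq.support_nodup
      · intro z hz1 hz2
        rw [Walk.support_reverse] at hz2
        exact hdisj z hz1 (List.mem_reverse.mp hz2)
    have heW : s(a, b) ∈ W.edges := by
      rw [hWdef, Walk.edges_append, Walk.edges_cons]
      simp
    refine ⟨xx, ?_, yy, ?_, ⟨W⟩, ?_⟩
    · obtain ⟨y', hy'⟩ := hxleaf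
      simp [hdeg1 _ _ hy']
    · obtain ⟨y', hy'⟩ := hyleaf
      simp [hdeg1 _ _ hy']
    · intro r _
      have : r.bypass = W := hpu _ _ r.bypass_isPath hWpath
      exact r.edges_bypass_subset (this ▸ heW)

private lemma leaf_mem_megset [Fintype V] [DecidableEq V] {G : SimpleGraph V}
    [DecidableRel G.Adj] {M : Set V} (hM : IsMEGSet G M) {z : V} (hz : G.degree z = 1) :
    z ∈ M := by
  classical
  obtain ⟨y, hzy⟩ := (G.degree_pos_iff_exists_adj z).mp (by omega)
  obtain ⟨a, ha, b, hb, hre, hmon⟩ := hM s(z, y) hzy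
  obtain ⟨r, hr, hrl⟩ := hre.exists_path_of_dist
  have hez : s(z, y) ∈ r.edges := hmon r hrl
  have hzs : z ∈ r.support := Walk.fst_mem_support_of_mem_edges r hez
  by_cases hza : z = a
  · exact hza ▸ ha
  by_cases hzb : z = b
  · exact hzb ▸ hb
  -- z is interior, so has two distinct neighbors : contradiction with degree 1
  exfalso
  have hsplit := r.take_spec hzs
  have hnodup := hr.support_nodup
  rw [← hsplit, Walk.support_append] at hnodup
  have hdisj := List.disjoint_of_nodup_append hnodup
  obtain ⟨w1, h1, d', hd⟩ := walk_cons_of_ne (r.dropUntil z hzs) hzb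
  obtain ⟨w2, h2, t', ht⟩ := walk_cons_of_ne (r.takeUntil z hzs).reverse hza
  have hw1 : w1 ∈ (r.dropUntil z hzs).support.tail := by
    rw [hd, Walk.support_cons]
    simp [Walk.start_mem_support]
  have hw2 : w2 ∈ (r.takeUntil z hzs).support := by
    have : w2 ∈ (r.takeUntil z hzs).reverse.support := by
      rw [ht, Walk.support_cons]
      simp [Walk.start_mem_support]
    rw [Walk.support_reverse] at this
    exact List.mem_reverse.mp this
  have hne12 : w2 ≠ w1 := fun h => hdisj hw2 (h ▸ hw1)
  have : 1 < G.degree z := by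
    unfold SimpleGraph.degree
    refine Finset.one_lt_card.mpr ⟨w2, ?_, w1, ?_, hne12⟩
    · rw [mem_neighborFinset]; exact h2
    · rw [mem_neighborFinset]; exact h1
  omega

private lemma meg_tree [Fintype V] [DecidableEq V] {G : SimpleGraph V} [DecidableRel G.Adj]
    (hT : G.IsTree) :
    meg G = (Finset.univ.filter fun w => G.degree w = 1).card := by
  classical
  have hLmeg : IsMEGSet G ↑(Finset.univ.filter fun w => G.degree w = 1) := tree_megset hT
  have hne : {n | ∃ M : Finset V, IsMEGSet G ↑M ∧ M.card = n}.Nonempty :=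
    ⟨_, _, hLmeg, rfl⟩
  apply le_antisymm
  · exact Nat.sInf_le ⟨_, hLmeg, rfl⟩
  · obtain ⟨M, hM, hMc⟩ := Nat.sInf_mem hne
    rw [show meg G = sInf {n | ∃ M : Finset V, IsMEGSet G ↑M ∧ M.card = n} from rfl, ← hMc]
    apply Finset.card_le_card
    intro z hz
    have hz1 : G.degree z = 1 := (Finset.mem_filter.mp hz).2
    exact leaf_mem_megset hM hz1

set_option maxRecDepth 8000 in
/-- Removing an edge `uv` of the unique cycle of a unicyclic graph: the `meg` of the
resulting tree is the number of leaves `l` of `G`, plus `1` for each endpoint of `uv`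
not having degree at least `3`. -/
theorem unicyclic_deleteCycleEdge_meg [Fintype V] [DecidableEq V] (G : SimpleGraph V)
    [DecidableRel G.Adj] (hconn : G.Connected)
    (hunicyclic : G.edgeFinset.card = Fintype.card V)
    (x : V) (c : G.Walk x x) (hc : c.IsCycle)
    (u v : V) (huv : G.Adj u v) (he : s(u, v) ∈ c.edges) :
    meg (G.deleteEdges {s(u, v)}) =
      (Finset.univ.filter (fun w => G.degree w = 1)).card
        + (if 3 ≤ G.degree u then 0 else 1)
        + (if 3 ≤ G.degree v then 0 else 1) := by
  classical
  haveI hdecG' : DecidableRel (G.deleteEdges {s(u, v)}).Adj := fun a b =>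
    decidable_of_iff (G.Adj a b ∧ s(a, b) ∉ ({s(u, v)} : Set (Sym2 V))) deleteEdges_adj.symm
  have hconn' : (G.deleteEdges {s(u, v)}).Connected := connected_del_cycle_edge hconn hc he
  -- at least three vertices
  have hn3 : 3 ≤ Fintype.card V := by
    have h1 := hc.three_le_length
    have h2 : c.support.tail.length = c.length := by
      have hl := c.length_support
      have : c.support.tail.length = c.support.length - 1 := by
        cases c.support <;> simp
      omega
    have h3 := hc.support_nodup.length_le_card
    omega
  -- edge counting
  have hmemuv : s(u, v) ∈ G.edgeFinset := mem_edgeFinset.mpr (c.edges_subset_edgeSet he)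
  have hef : (G.deleteEdges {s(u, v)}).edgeFinset = G.edgeFinset.erase s(u, v) := by
    ext e'
    simp [edgeSet_deleteEdges, Finset.mem_erase, and_comm]
  have hcard' : (G.deleteEdges {s(u, v)}).edgeFinset.card = Fintype.card V - 1 := by
    rw [hef, Finset.card_erase_of_mem hmemuv, hunicyclic]
  -- acyclicity
  have hac : (G.deleteEdges {s(u, v)}).IsAcyclic := by
    by_contra h
    simp only [SimpleGraph.IsAcyclic] at h
    push_neg at h
    obtain ⟨x₂, c₂, hc₂⟩ := h
    have hne2 : c₂.edges ≠ [] := by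
      intro h'
      have := c₂.length_edges
      have h3 := hc₂.three_le_length
      rw [h'] at this
      simp at this
      omega
    obtain ⟨e₂, he₂⟩ := List.exists_mem_of_ne_nil _ hne2
    revert he₂
    induction e₂ using Sym2.ind with
    | _ p₂ q₂ =>
      intro he₂
      haveI : DecidableRel ((G.deleteEdges {s(u, v)}).deleteEdges {s(p₂, q₂)}).Adj := fun a b =>
        decidable_of_iff ((G.deleteEdges {s(u, v)}).Adj a b ∧
          s(a, b) ∉ ({s(p₂, q₂)} : Set (Sym2 V))) deleteEdges_adj.symm
      have hmem2 : s(p₂, q₂) ∈ (G.deleteEdges {s(u, v)}).edgeFinset :=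
        mem_edgeFinset.mpr (c₂.edges_subset_edgeSet he₂)
      have hcard'' : ((G.deleteEdges {s(u, v)}).deleteEdges {s(p₂, q₂)}).edgeFinset.card
          = Fintype.card V - 2 := by
        have : ((G.deleteEdges {s(u, v)}).deleteEdges {s(p₂, q₂)}).edgeFinset
            = (G.deleteEdges {s(u, v)}).edgeFinset.erase s(p₂, q₂) := by
          ext e'
          simp only [mem_edgeFinset, edgeSet_deleteEdges, Set.mem_diff,
            Set.mem_singleton_iff, Finset.mem_erase]
          tauto
        rw [this, Finset.card_erase_of_mem hmem2, hcard']
        omega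
      have := card_le_edges_succ (Fintype.card V - 2)
        ((G.deleteEdges {s(u, v)}).deleteEdges {s(p₂, q₂)})
        (connected_del_cycle_edge hconn' hc₂ he₂) hcard''
      omega
  have hT : (G.deleteEdges {s(u, v)}).IsTree := ⟨hconn', hac⟩
  rw [meg_tree hT]
  -- now the counting of leaves
  have hunev : u ≠ v := huv.ne
  -- degrees in the new graph
  have hNu : (G.deleteEdges {s(u, v)}).neighborFinset u = (G.neighborFinset u).erase v := by
    ext w
    simp only [mem_neighborFinset, Finset.mem_erase, deleteEdges_adj, Set.mem_singleton_iff]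
    constructor
    · rintro ⟨h1, h2⟩
      exact ⟨fun h => h2 (by rw [h]), h1⟩
    · rintro ⟨h1, h2⟩
      exact ⟨h2, fun h => h1 (Sym2.congr_right.mp h)⟩
  have hNv : (G.deleteEdges {s(u, v)}).neighborFinset v = (G.neighborFinset v).erase u := by
    ext w
    simp only [mem_neighborFinset, Finset.mem_erase, deleteEdges_adj, Set.mem_singleton_iff]
    constructor
    · rintro ⟨h1, h2⟩
      refine ⟨fun h => h2 ?_, h1⟩
      rw [h, Sym2.eq_swap]
    · rintro ⟨h1, h2⟩
      refine ⟨h2, fun h => h1 ?_⟩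
      rw [Sym2.eq_iff] at h
      rcases h with ⟨h', -⟩ | ⟨-, h'⟩
      · exact absurd h' hunev.symm
      · exact h'
  have hdu : (G.deleteEdges {s(u, v)}).degree u = G.degree u - 1 := by
    unfold SimpleGraph.degree
    rw [hNu, Finset.card_erase_of_mem (by rw [mem_neighborFinset]; exact huv)]
  have hdv : (G.deleteEdges {s(u, v)}).degree v = G.degree v - 1 := by
    unfold SimpleGraph.degree
    rw [hNv, Finset.card_erase_of_mem (by rw [mem_neighborFinset]; exact huv.symm)]
  have hdw : ∀ w, w ≠ u → w ≠ v → (G.deleteEdges {s(u, v)}).degree w = G.degree w := by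
    intro w hwu hwv
    unfold SimpleGraph.degree
    congr 1
    ext z
    simp only [mem_neighborFinset, deleteEdges_adj, Set.mem_singleton_iff]
    refine ⟨fun h => h.1, fun h => ⟨h, fun h' => ?_⟩⟩
    rw [Sym2.eq_iff] at h'
    rcases h' with ⟨h'', -⟩ | ⟨h'', -⟩
    · exact hwu h''
    · exact hwv h''
  -- every vertex of the new graph has positive degree
  have hpos : ∀ w, 0 < (G.deleteEdges {s(u, v)}).degree w := by
    intro w
    obtain ⟨z, hzw⟩ := Fintype.exists_ne_of_one_lt_card (by omega) w
    have hre : (G.deleteEdges {s(u, v)}).Reachable w z := hconn'.preconnected w z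
    refine hre.elim fun wk => ?_
    obtain ⟨y, hy, -, -⟩ := walk_cons_of_ne wk (Ne.symm hzw)
    exact ((G.deleteEdges {s(u, v)}).degree_pos_iff_exists_adj w).mpr ⟨y, hy⟩
  have hu2 : 2 ≤ G.degree u := by have := hpos u; omega
  have hv2 : 2 ≤ G.degree v := by have := hpos v; omega
  -- the leaf sets
  set Su : Finset V := if 3 ≤ G.degree u then ∅ else {u} with hSu
  set Sv : Finset V := if 3 ≤ G.degree v then ∅ else {v} with hSv
  have hsplitset : (Finset.univ.filter fun w => (G.deleteEdges {s(u, v)}).degree w = 1)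
      = ((Finset.univ.filter fun w => G.degree w = 1) ∪ Su) ∪ Sv := by
    ext w
    simp only [Finset.mem_filter, Finset.mem_univ, true_and, Finset.mem_union]
    by_cases hwu : w = u
    · subst hwu
      rw [hdu, hSu, hSv]
      split_ifs with h3u h3v h3v <;> simp [hunev] <;> omega
    · by_cases hwv : w = v
      · subst hwv
        rw [hdv, hSu, hSv]
        split_ifs with h3u h3v h3v <;> simp [hunev.symm] <;> omega
      · rw [hdw w hwu hwv, hSu, hSv]
        split_ifs <;> simp [hwu, hwv]
  rw [hsplitset]
  have hdisj1 : Disjoint ((Finset.univ.filter fun w => G.degree w = 1) ∪ Su) Sv := by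
    rw [Finset.disjoint_right]
    intro z hz
    rw [hSv] at hz
    split_ifs at hz with h3v
    · simp at hz
    · simp only [Finset.mem_singleton] at hz
      subst hz
      simp only [Finset.mem_union, Finset.mem_filter, Finset.mem_univ, true_and, hSu]
      push_neg
      constructor
      · omega
      · split_ifs <;> simp [hunev.symm]
  have hdisj2 : Disjoint (Finset.univ.filter fun w => G.degree w = 1) Su := by
    rw [Finset.disjoint_right]
    intro z hz
    rw [hSu] at hz
    split_ifs at hz with h3u
    · simp at hz
    · simp only [Finset.mem_singleton] at hz
      subst hz
      simp only [Finset.mem_filter, Finset.mem_univ, true_and]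
      omega
  rw [Finset.card_union_of_disjoint hdisj1, Finset.card_union_of_disjoint hdisj2]
  have hcSu : Su.card = if 3 ≤ G.degree u then 0 else 1 := by
    rw [hSu, apply_ite Finset.card]
    simp
  have hcSv : Sv.card = if 3 ≤ G.degree v then 0 else 1 := by
    rw [hSv, apply_ite Finset.card]
    simp
  rw [hcSu, hcSv]
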